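/- Let V be a commutative unital quantale and Φ a class of V-distributors satisfying (Ax1)–(Ax3). For every V-category (X,a), the V-category ΦX is Φ-cocomplete; more precisely, the map (y^Φ_X)^{-1} : ΦΦX → ΦX sending Ψ to Ψ ∘ (y^Φ_X)_* (elementwise, x ↦ ⨆ ψ ∈ ΦX, ψ x ⊗ Ψ ψ) is a well-defined V-functor which is both a left adjoint and a left inverse of y^Φ_{ΦX} : ΦX → ΦΦX. -/
import Mathlib


universe u

/-- A commutative unital quantale: a complete lattice with a commutative monoid
structure whose multiplication distributes over arbitrary suprema. -/
class CommQuantale (V : Type u) extends CompleteLattice V, CommMonoid V where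
  mul_sSup : ∀ (x : V) (s : Set V), x * sSup s = ⨆ v ∈ s, x * v

variable {V : Type u} [CommQuantale V]

/-- The internal hom of the quantale: `qhom u v = sSup {w | u * w ≤ v}`. -/
def qhom (u v : V) : V := sSup {w | u * w ≤ v}

theorem mul_iSup' {ι : Sort*} (u : V) (v : ι → V) : u * (⨆ i, v i) = ⨆ i, u * v i := by
  rw [iSup, CommQuantale.mul_sSup, iSup_range]

theorem mul_mono_right' (u : V) {w w' : V} (h : w ≤ w') : u * w ≤ u * w' := by
  have hs : sSup ({w, w'} : Set V) = w' := by
    apply le_antisymm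
    · exact sSup_le (by rintro x (rfl | rfl); exacts [h, le_rfl])
    · exact le_sSup (by simp)
  have hm := CommQuantale.mul_sSup u ({w, w'} : Set V)
  rw [hs] at hm
  rw [hm]
  exact le_iSup₂ (f := fun v (_ : v ∈ ({w, w'} : Set V)) => u * v) w (by simp)

theorem mul_mono_left' {w w' : V} (h : w ≤ w') (u : V) : w * u ≤ w' * u := by
  rw [mul_comm w u, mul_comm w' u]; exact mul_mono_right' u h

theorem le_qhom_iff {u v w : V} : w ≤ qhom u v ↔ u * w ≤ v := by
  constructor
  · intro h
    have h2 : u * qhom u v ≤ v := by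
      rw [qhom, CommQuantale.mul_sSup]
      exact iSup₂_le fun w hw => hw
    exact le_trans (mul_mono_right' u h) h2
  · intro h; exact le_sSup h

theorem bot_mul' (u : V) : (⊥ : V) * u = ⊥ := by
  rw [mul_comm]
  have hm := CommQuantale.mul_sSup u (∅ : Set V)
  simpa using hm

/-- A `V`-category structure on `X`. -/
structure VCatStr (V : Type u) [CommQuantale V] (X : Type u) where
  hom : X → X → V
  refl : ∀ x, (1 : V) ≤ hom x x
  comp : ∀ x y z, hom x y * hom y z ≤ hom x z

/-- `V`-functoriality. -/
def IsVFunctor {X Y : Type u} (a : VCatStr V X) (b : VCatStr V Y) (f : X → Y) : Prop :=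
  ∀ x x', a.hom x x' ≤ b.hom (f x) (f x')

/-- `φ` is a `V`-distributor `(X,a) ⇸ (Y,b)`. -/
def IsDist {X Y : Type u} (a : VCatStr V X) (b : VCatStr V Y) (φ : X → Y → V) : Prop :=
  (∀ x' x y, a.hom x' x * φ x y ≤ φ x' y) ∧ (∀ x y y', φ x y * b.hom y y' ≤ φ x y')

/-- Composite `ψ ∘ φ` of distributors (`φ` first). -/
def dComp {X Y Z : Type u} (ψ : Y → Z → V) (φ : X → Y → V) : X → Z → V :=
  fun x z => ⨆ y, φ x y * ψ y z

/-- The extension `γ ⟜ α`. -/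
def dExt {X Y Z : Type u} (γ : X → Z → V) (α : X → Y → V) : Y → Z → V :=
  fun y z => ⨅ x, qhom (α x y) (γ x z)

/-- `f_*`. -/
def fStar {X Y : Type u} (b : VCatStr V Y) (f : X → Y) : X → Y → V :=
  fun x y => b.hom (f x) y

/-- `f^*`. -/
def fCostar {X Y : Type u} (b : VCatStr V Y) (f : X → Y) : Y → X → V :=
  fun y x => b.hom y (f x)

/-- `ψ ⊣ φ` is an adjunction of distributors, `ψ : (A,α) ⇸ (B,β)`, `φ : (B,β) ⇸ (A,α)`. -/
def DistAdj {A B : Type u} (α : VCatStr V A) (β : VCatStr V B)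
    (ψ : A → B → V) (φ : B → A → V) : Prop :=
  (∀ x x', α.hom x x' ≤ ⨆ y, ψ x y * φ y x') ∧
  (∀ y y', (⨆ x, φ y x * ψ x y') ≤ β.hom y y')

/-- `φ : (B,β) ⇸ (A,α)` is a right adjoint distributor. -/
def IsRightAdjDist {A B : Type u} (β : VCatStr V B) (α : VCatStr V A) (φ : B → A → V) : Prop :=
  ∃ ψ : A → B → V, IsDist α β ψ ∧ DistAdj α β ψ φ

/-- The pointwise order on `V`-functors. -/
def VLe {X Y : Type u} (b : VCatStr V Y) (f g : X → Y) : Prop :=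
  ∀ x, (1 : V) ≤ b.hom (f x) (g x)

/-- Equivalence of `V`-functors. -/
def VEquiv {X Y : Type u} (b : VCatStr V Y) (f g : X → Y) : Prop :=
  VLe b f g ∧ VLe b g f

def FullyFaithful {X Y : Type u} (a : VCatStr V X) (b : VCatStr V Y) (f : X → Y) : Prop :=
  ∀ x x', b.hom (f x) (f x') = a.hom x x'

def DenseF {X Y : Type u} (b : VCatStr V Y) (f : X → Y) : Prop :=
  ∀ y y', (⨆ x, b.hom y (f x) * b.hom (f x) y') = b.hom y y'

/-- `f` is a left adjoint `V`-functor. -/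
def LeftAdjointF {X Y : Type u} (a : VCatStr V X) (b : VCatStr V Y) (f : X → Y) : Prop :=
  ∃ g : Y → X, IsVFunctor b a g ∧ (∀ x, (1 : V) ≤ a.hom x (g (f x))) ∧
    (∀ y, (1 : V) ≤ b.hom (f (g y)) y)

/-- The one-point `V`-category `G`. -/
def unitCat (V : Type u) [CommQuantale V] : VCatStr V PUnit where
  hom _ _ := 1
  refl _ := le_refl 1
  comp _ _ _ := (one_mul 1).le

/-- Presheaves on `(X,a)`: distributors `(X,a) ⇸ G`. -/
def IsPresheaf {X : Type u} (a : VCatStr V X) (ψ : X → V) : Prop :=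
  ∀ x' x, a.hom x' x * ψ x ≤ ψ x'

/-- A class of `V`-distributors: for each pair of `V`-categories a predicate on maps. -/
def DistClass (V : Type u) [CommQuantale V] : Type (u + 1) :=
  ∀ ⦃X Y : Type u⦄, VCatStr V X → VCatStr V Y → (X → Y → V) → Prop

/-- The presheaf `ψ`, seen as distributor into `G`, lies in `Φ`. -/
def InPhi (Φ : DistClass V) {X : Type u} (a : VCatStr V X) (ψ : X → V) : Prop :=
  Φ a (unitCat V) (fun x _ => ψ x)

/-- Axioms (Ax1)–(Ax3) on a class of distributors. -/
structure DistAx (Φ : DistClass V) : Prop where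
  ax1 : ∀ {X Y : Type u} (a : VCatStr V X) (b : VCatStr V Y) (f : X → Y),
      IsVFunctor a b f → Φ b a (fCostar b f)
  ax2_left : ∀ {W X Y : Type u} (d : VCatStr V W) (a : VCatStr V X) (b : VCatStr V Y)
      (φ : W → Y → V) (f : X → Y), IsDist d b φ → IsVFunctor a b f → Φ d b φ →
      Φ d a (dComp (fCostar b f) φ)
  ax2_right : ∀ {X Y Z : Type u} (a : VCatStr V X) (b : VCatStr V Y) (c : VCatStr V Z)
      (φ : X → Z → V) (f : X → Y), IsDist a c φ → IsVFunctor a b f → Φ a c φ →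
      Φ b c (dComp φ (fCostar b f))
  ax2_star : ∀ {W X Z : Type u} (d : VCatStr V W) (a : VCatStr V X) (c : VCatStr V Z)
      (φ : X → Z → V) (f : W → X), IsDist a c φ → IsVFunctor d a f → Φ a c φ →
      Φ d a (fStar a f) → Φ d c (dComp φ (fStar a f))
  ax3 : ∀ {X Y : Type u} (a : VCatStr V X) (b : VCatStr V Y) (φ : X → Y → V),
      IsDist a b φ → (∀ y, Φ a (unitCat V) (fun x _ => φ x y)) → Φ a b φ

/-- Axiom (Ax4): `f_* ∈ Φ` for every surjective `V`-functor `f`. -/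
def Ax4 (Φ : DistClass V) : Prop :=
  ∀ {X Y : Type u} (a : VCatStr V X) (b : VCatStr V Y) (f : X → Y),
    IsVFunctor a b f → Function.Surjective f → Φ a b (fStar b f)

/-- `f` is `Φ`-dense. -/
def PhiDense (Φ : DistClass V) {X Y : Type u} (a : VCatStr V X) (b : VCatStr V Y)
    (f : X → Y) : Prop :=
  Φ a b (fStar b f)

/-- The `V`-category structure on `X → V`. -/
def funCat (V : Type u) [CommQuantale V] (X : Type u) : VCatStr V (X → V) where
  hom ψ ψ' := ⨅ x, qhom (ψ x) (ψ' x)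
  refl ψ := le_iInf fun x => le_qhom_iff.mpr (mul_one _).le
  comp ψ χ ω := le_iInf fun x => le_qhom_iff.mpr <| by
    calc ψ x * ((⨅ x', qhom (ψ x') (χ x')) * (⨅ x', qhom (χ x') (ω x')))
        = (ψ x * (⨅ x', qhom (ψ x') (χ x'))) * (⨅ x', qhom (χ x') (ω x')) :=
          (mul_assoc _ _ _).symm
      _ ≤ χ x * (⨅ x', qhom (χ x') (ω x')) :=
          mul_mono_left' (le_qhom_iff.mp (iInf_le (fun x' => qhom (ψ x') (χ x')) x)) _
      _ ≤ ω x := le_qhom_iff.mp (iInf_le (fun x' => qhom (χ x') (ω x')) x)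

/-- Full sub-`V`-category on a predicate. -/
def subCat {X : Type u} (a : VCatStr V X) (P : X → Prop) : VCatStr V {x : X // P x} where
  hom x y := a.hom x.1 y.1
  refl x := a.refl x.1
  comp x y z := a.comp x.1 y.1 z.1

/-- Carrier of the presheaf `V`-category `PX`. -/
def PCarrier {X : Type u} (a : VCatStr V X) : Type u := {ψ : X → V // IsPresheaf a ψ}

/-- The presheaf `V`-category `PX`. -/
def pCat {X : Type u} (a : VCatStr V X) : VCatStr V (PCarrier a) :=
  subCat (funCat V X) (IsPresheaf a)

/-- Carrier of `ΦX`: presheaves lying in `Φ`. -/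
def PhiCarrier (Φ : DistClass V) {X : Type u} (a : VCatStr V X) : Type u :=
  {ψ : X → V // IsPresheaf a ψ ∧ InPhi Φ a ψ}

/-- The `V`-category `ΦX`. -/
def phiCat (Φ : DistClass V) {X : Type u} (a : VCatStr V X) : VCatStr V (PhiCarrier Φ a) :=
  subCat (funCat V X) fun ψ => IsPresheaf a ψ ∧ InPhi Φ a ψ

/-- The inclusion `ΦX → PX`. -/
def phiIncl (Φ : DistClass V) {X : Type u} (a : VCatStr V X) : PhiCarrier Φ a → PCarrier a :=
  fun ψ => ⟨ψ.1, ψ.2.1⟩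

/-- The corestricted Yoneda functor `y^Φ_X : X → ΦX`. -/
def yPhi (Φ : DistClass V) (hΦ : DistAx Φ) {X : Type u} (a : VCatStr V X) (x : X) :
    PhiCarrier Φ a :=
  ⟨fun x' => a.hom x' x,
   fun x' x'' => a.comp x' x'' x,
   hΦ.ax1 (unitCat V) a (fun _ => x) (fun _ _ => a.refl x)⟩

/-- `Φf : ΦX → ΦY`, `ψ ↦ ψ ∘ f^*`. -/
def phiMap (Φ : DistClass V) (hΦ : DistAx Φ) {X Y : Type u} (a : VCatStr V X) (b : VCatStr V Y)
    (f : X → Y) (hf : IsVFunctor a b f) (ψ : PhiCarrier Φ a) : PhiCarrier Φ b :=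
  ⟨fun y => ⨆ x, b.hom y (f x) * ψ.1 x,
   by
    intro y' y
    rw [mul_iSup']
    refine iSup_le fun x => ?_
    refine le_trans ?_ (le_iSup _ x)
    calc b.hom y' y * (b.hom y (f x) * ψ.1 x)
        = (b.hom y' y * b.hom y (f x)) * ψ.1 x := (mul_assoc _ _ _).symm
      _ ≤ b.hom y' (f x) * ψ.1 x := mul_mono_left' (b.comp y' y (f x)) _,
   by
    have hd : IsDist a (unitCat V) (fun x (_ : PUnit) => ψ.1 x) :=
      ⟨fun x' x _ => ψ.2.1 x' x, fun x _ _ => le_of_eq (mul_one _)⟩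
    exact hΦ.ax2_right a b (unitCat V) _ f hd hf ψ.2.2⟩

/-- `g` is the `φ`-weighted colimit of `h`, i.e. `g_* = h_* ⟜ φ`. -/
def IsColimit {Y Z X : Type u} (_b : VCatStr V Y) (_c : VCatStr V Z) (a : VCatStr V X)
    (φ : Y → Z → V) (h : Y → X) (g : Z → X) : Prop :=
  ∀ z x, a.hom (g z) x = ⨅ y, qhom (φ y z) (a.hom (h y) x)

/-- `Φ`-cocompleteness. -/
def PhiCocomplete (Φ : DistClass V) {X : Type u} (a : VCatStr V X) : Prop :=
  ∀ ⦃Y Z : Type u⦄ (b : VCatStr V Y) (c : VCatStr V Z) (φ : Y → Z → V) (h : Y → X),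
    IsDist b c φ → Φ b c φ → IsVFunctor b a h →
    ∃ g : Z → X, IsVFunctor c a g ∧ IsColimit b c a φ h g

/-- `Φ`-cocontinuity. -/
def PhiCocontinuous (Φ : DistClass V) {X X' : Type u} (a : VCatStr V X) (a' : VCatStr V X')
    (f : X → X') : Prop :=
  ∀ ⦃Y Z : Type u⦄ (b : VCatStr V Y) (c : VCatStr V Z) (φ : Y → Z → V) (h : Y → X) (g : Z → X),
    IsDist b c φ → Φ b c φ → IsVFunctor b a h → IsVFunctor c a g →
    IsColimit b c a φ h g → IsColimit b c a' φ (f ∘ h) (f ∘ g)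

/-- `Φ`-injectivity. -/
def PhiInjective (Φ : DistClass V) {X : Type u} (a : VCatStr V X) : Prop :=
  ∀ ⦃A B : Type u⦄ (α : VCatStr V A) (β : VCatStr V B) (f : A → X) (i : A → B),
    IsVFunctor α a f → IsVFunctor α β i → FullyFaithful α β i → PhiDense Φ α β i →
    ∃ g : B → X, IsVFunctor β a g ∧ VEquiv a (g ∘ i) f

/-- Separatedness. -/
def Separated {X : Type u} (a : VCatStr V X) : Prop :=
  ∀ ⦃Y : Type u⦄ (b : VCatStr V Y) (f g : Y → X),
    IsVFunctor b a f → IsVFunctor b a g → VEquiv a f g → f = g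


section Aux11

theorem qhom_counit' (u v : V) : u * qhom u v ≤ v := le_qhom_iff.mp le_rfl

theorem iSup_mul'' {ι : Sort*} (v : ι → V) (u : V) : (⨆ i, v i) * u = ⨆ i, v i * u := by
  rw [mul_comm, mul_iSup']
  exact iSup_congr fun i => mul_comm u (v i)

theorem qhom_iSup_left' {ι : Sort*} (v : ι → V) (w : V) :
    qhom (⨆ i, v i) w = ⨅ i, qhom (v i) w := by
  apply le_antisymm
  · exact le_iInf fun i => le_qhom_iff.mpr
      (le_trans (mul_mono_left' (le_iSup v i) _) (qhom_counit' _ _))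
  · refine le_qhom_iff.mpr ?_
    rw [iSup_mul'']
    exact iSup_le fun i =>
      le_trans (mul_mono_right' _ (iInf_le _ i)) (qhom_counit' _ _)

theorem qhom_iInf_right' {ι : Sort*} (u : V) (w : ι → V) :
    qhom u (⨅ i, w i) = ⨅ i, qhom u (w i) := by
  apply le_antisymm
  · exact le_iInf fun i => le_qhom_iff.mpr (le_trans (qhom_counit' _ _) (iInf_le _ i))
  · exact le_qhom_iff.mpr (le_iInf fun i =>
      le_trans (mul_mono_right' _ (iInf_le _ i)) (qhom_counit' _ _))

theorem qhom_curry' (u v w : V) : qhom (u * v) w = qhom v (qhom u w) := by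
  have key : ∀ t : V, t ≤ qhom (u * v) w ↔ t ≤ qhom v (qhom u w) := by
    intro t
    rw [le_qhom_iff, le_qhom_iff, le_qhom_iff, ← mul_assoc]
  exact le_antisymm ((key _).mp le_rfl) ((key _).mpr le_rfl)

theorem yoneda_eval {X : Type u} (a : VCatStr V X) {ψ : X → V} (hψ : IsPresheaf a ψ) (x : X) :
    (⨅ x', qhom (a.hom x' x) (ψ x')) = ψ x := by
  apply le_antisymm
  · refine le_trans (iInf_le _ x) ?_
    calc qhom (a.hom x x) (ψ x) = 1 * qhom (a.hom x x) (ψ x) := (one_mul _).symm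
      _ ≤ a.hom x x * qhom (a.hom x x) (ψ x) := mul_mono_left' (a.refl x) _
      _ ≤ ψ x := qhom_counit' _ _
  · exact le_iInf fun x' => le_qhom_iff.mpr (hψ x' x)

theorem fStar_isDist {X Y : Type u} (a : VCatStr V X) (b : VCatStr V Y) (f : X → Y)
    (hf : IsVFunctor a b f) : IsDist a b (fStar b f) :=
  ⟨fun x' x y => le_trans (mul_mono_left' (hf x' x) _) (b.comp _ _ _),
   fun x y y' => b.comp _ _ _⟩

theorem fCostar_isDist {X Y : Type u} (a : VCatStr V X) (b : VCatStr V Y) (f : X → Y)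
    (hf : IsVFunctor a b f) : IsDist b a (fCostar b f) :=
  ⟨fun y' y x => b.comp _ _ _,
   fun y x x' => le_trans (mul_mono_right' _ (hf x x')) (b.comp _ _ _)⟩

theorem dComp_isDist {X Y Z : Type u} (a : VCatStr V X) (b : VCatStr V Y) (c : VCatStr V Z)
    {α : X → Y → V} {β : Y → Z → V} (hα : IsDist a b α) (hβ : IsDist b c β) :
    IsDist a c (dComp β α) := by
  constructor
  · intro x' x z
    show a.hom x' x * (⨆ y, α x y * β y z) ≤ ⨆ y, α x' y * β y z
    rw [mul_iSup']
    refine iSup_le fun y => ?_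
    refine le_trans ?_ (le_iSup _ y)
    rw [← mul_assoc]
    exact mul_mono_left' (hα.1 x' x y) _
  · intro x z z'
    show (⨆ y, α x y * β y z) * c.hom z z' ≤ ⨆ y, α x y * β y z'
    rw [iSup_mul'']
    refine iSup_le fun y => ?_
    refine le_trans ?_ (le_iSup _ y)
    rw [mul_assoc]
    exact mul_mono_right' _ (hβ.2 y z z')

theorem yPhi_isVFunctor (Φ : DistClass V) (hΦ : DistAx Φ) {X : Type u} (a : VCatStr V X) :
    IsVFunctor a (phiCat Φ a) (yPhi Φ hΦ a) :=
  fun x x' => le_iInf fun x'' => le_qhom_iff.mpr (a.comp x'' x x')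

theorem yPhi_star_in_Phi (Φ : DistClass V) (hΦ : DistAx Φ) {X : Type u} (a : VCatStr V X) :
    Φ a (phiCat Φ a) (fStar (phiCat Φ a) (yPhi Φ hΦ a)) := by
  refine hΦ.ax3 _ _ _ (fStar_isDist a _ _ (yPhi_isVFunctor Φ hΦ a)) ?_
  intro ψ
  show Φ a (unitCat V) fun x _ => (phiCat Φ a).hom (yPhi Φ hΦ a x) ψ
  have he : (fun x (_ : PUnit) => (phiCat Φ a).hom (yPhi Φ hΦ a x) ψ)
      = fun x (_ : PUnit) => ψ.1 x := by
    funext x u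
    exact yoneda_eval a ψ.2.1 x
  rw [he]
  exact ψ.2.2

theorem slice_in_Phi (Φ : DistClass V) (hΦ : DistAx Φ) {X Z : Type u} (a : VCatStr V X)
    (c : VCatStr V Z) (ρ : X → Z → V) (hd : IsDist a c ρ) (hρ : Φ a c ρ) (z : Z) :
    InPhi Φ a (fun x => ρ x z) := by
  have hz : IsVFunctor (unitCat V) c (fun _ => z) := fun _ _ => c.refl z
  have h := hΦ.ax2_left a (unitCat V) c ρ (fun _ => z) hd hz hρ
  have he : dComp (fCostar c fun _ => z) ρ = fun x (_ : PUnit) => ρ x z := by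
    funext x u
    show (⨆ z', ρ x z' * c.hom z' z) = ρ x z
    apply le_antisymm
    · exact iSup_le fun z' => hd.2 x z' z
    · refine le_trans ?_ (le_iSup _ z)
      calc ρ x z = ρ x z * 1 := (mul_one _).symm
        _ ≤ ρ x z * c.hom z z := mul_mono_right' _ (c.refl z)
  rw [he] at h
  exact h

end Aux11

/-- `ΦX` is `Φ`-cocomplete, with `Sup = (y^Φ_X)⁻¹ : ΦΦX → ΦX`, `Ψ ↦ Ψ ∘ (y^Φ_X)_*`,
a left adjoint and left inverse of `y^Φ_{ΦX}`. -/
theorem stmt11 (Φ : DistClass V) (hΦ : DistAx Φ) {X : Type u} (a : VCatStr V X) :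
    PhiCocomplete Φ (phiCat Φ a) ∧
    ∃ S : PhiCarrier Φ (phiCat Φ a) → PhiCarrier Φ a,
      (∀ Ψ x, (S Ψ).1 x = ⨆ ψ : PhiCarrier Φ a, ψ.1 x * Ψ.1 ψ) ∧
      IsVFunctor (phiCat Φ (phiCat Φ a)) (phiCat Φ a) S ∧
      (∀ Ψ, (1 : V) ≤ (phiCat Φ (phiCat Φ a)).hom Ψ (yPhi Φ hΦ (phiCat Φ a) (S Ψ))) ∧
      (∀ ψ, (1 : V) ≤ (phiCat Φ a).hom (S (yPhi Φ hΦ (phiCat Φ a) ψ)) ψ) ∧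
      (∀ ψ, S (yPhi Φ hΦ (phiCat Φ a) ψ) = ψ) := by
  constructor
  · intro Y Z b c φ h hd hφ hh
    have hθd : IsDist (phiCat Φ a) c (dComp φ (fCostar (phiCat Φ a) h)) :=
      dComp_isDist (phiCat Φ a) b c (fCostar_isDist b (phiCat Φ a) h hh) hd
    have hθΦ : Φ (phiCat Φ a) c (dComp φ (fCostar (phiCat Φ a) h)) :=
      hΦ.ax2_right b (phiCat Φ a) c φ h hd hh hφ
    have hρd : IsDist a c (dComp (dComp φ (fCostar (phiCat Φ a) h))
        (fStar (phiCat Φ a) (yPhi Φ hΦ a))) :=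
      dComp_isDist a (phiCat Φ a) c
        (fStar_isDist a (phiCat Φ a) (yPhi Φ hΦ a) (yPhi_isVFunctor Φ hΦ a)) hθd
    have hρΦ := hΦ.ax2_star a (phiCat Φ a) c (dComp φ (fCostar (phiCat Φ a) h))
      (yPhi Φ hΦ a) hθd (yPhi_isVFunctor Φ hΦ a) hθΦ (yPhi_star_in_Phi Φ hΦ a)
    have hy : ∀ (x : X) (ψ : PhiCarrier Φ a), (phiCat Φ a).hom (yPhi Φ hΦ a x) ψ = ψ.1 x :=
      fun x ψ => yoneda_eval a ψ.2.1 x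
    have heq : ∀ z x, dComp (dComp φ (fCostar (phiCat Φ a) h))
        (fStar (phiCat Φ a) (yPhi Φ hΦ a)) x z = ⨆ y, (h y).1 x * φ y z := by
      intro z x
      show (⨆ ψ : PhiCarrier Φ a, (phiCat Φ a).hom (yPhi Φ hΦ a x) ψ *
          ⨆ y, (phiCat Φ a).hom ψ (h y) * φ y z) = ⨆ y, (h y).1 x * φ y z
      apply le_antisymm
      · refine iSup_le fun ψ => ?_
        rw [hy x ψ, mul_iSup']
        refine iSup_le fun y => ?_
        refine le_trans ?_ (le_iSup _ y)
        rw [← mul_assoc]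
        refine mul_mono_left' ?_ _
        exact le_trans
          (mul_mono_right' _ (iInf_le (fun x' => qhom (ψ.1 x') ((h y).1 x')) x))
          (qhom_counit' _ _)
      · refine iSup_le fun y => ?_
        refine le_trans ?_ (le_iSup _ (h y))
        rw [hy x (h y)]
        refine mul_mono_right' _ ?_
        refine le_trans ?_ (le_iSup _ y)
        calc φ y z = 1 * φ y z := (one_mul _).symm
          _ ≤ (phiCat Φ a).hom (h y) (h y) * φ y z :=
            mul_mono_left' ((phiCat Φ a).refl (h y)) _
    have hpre0 : ∀ z, IsPresheaf a fun x => ⨆ y, (h y).1 x * φ y z := by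
      intro z x' x
      show a.hom x' x * (⨆ y, (h y).1 x * φ y z) ≤ ⨆ y, (h y).1 x' * φ y z
      rw [mul_iSup']
      refine iSup_le fun y => ?_
      refine le_trans ?_ (le_iSup _ y)
      rw [← mul_assoc]
      exact mul_mono_left' ((h y).2.1 x' x) _
    have hin0 : ∀ z, InPhi Φ a fun x => ⨆ y, (h y).1 x * φ y z := by
      intro z
      have hs := slice_in_Phi Φ hΦ a c _ hρd hρΦ z
      have he2 : (fun x => dComp (dComp φ (fCostar (phiCat Φ a) h))
          (fStar (phiCat Φ a) (yPhi Φ hΦ a)) x z) = fun x => ⨆ y, (h y).1 x * φ y z :=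
        funext fun x => heq z x
      rw [he2] at hs
      exact hs
    refine ⟨fun z => ⟨fun x => ⨆ y, (h y).1 x * φ y z, hpre0 z, hin0 z⟩, ?_, ?_⟩
    · intro z z'
      show c.hom z z' ≤ ⨅ x, qhom (⨆ y, (h y).1 x * φ y z) (⨆ y, (h y).1 x * φ y z')
      refine le_iInf fun x => le_qhom_iff.mpr ?_
      rw [iSup_mul'']
      refine iSup_le fun y => ?_
      refine le_trans ?_ (le_iSup _ y)
      rw [mul_assoc]
      exact mul_mono_right' _ (hd.2 y z z')
    · intro z χ
      show (⨅ x, qhom (⨆ y, (h y).1 x * φ y z) (χ.1 x)) =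
          ⨅ y, qhom (φ y z) (⨅ x, qhom ((h y).1 x) (χ.1 x))
      calc (⨅ x, qhom (⨆ y, (h y).1 x * φ y z) (χ.1 x))
          = ⨅ x, ⨅ y, qhom (φ y z) (qhom ((h y).1 x) (χ.1 x)) := by
            refine iInf_congr fun x => ?_
            rw [qhom_iSup_left']
            exact iInf_congr fun y => qhom_curry' _ _ _
        _ = ⨅ y, ⨅ x, qhom (φ y z) (qhom ((h y).1 x) (χ.1 x)) := iInf_comm
        _ = ⨅ y, qhom (φ y z) (⨅ x, qhom ((h y).1 x) (χ.1 x)) :=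
            iInf_congr fun y => (qhom_iInf_right' _ _).symm
  · have hpre2 : ∀ Ψ : PhiCarrier Φ (phiCat Φ a),
        IsPresheaf a fun x => ⨆ ψ : PhiCarrier Φ a, ψ.1 x * Ψ.1 ψ := by
      intro Ψ x' x
      show a.hom x' x * (⨆ ψ : PhiCarrier Φ a, ψ.1 x * Ψ.1 ψ) ≤
          ⨆ ψ : PhiCarrier Φ a, ψ.1 x' * Ψ.1 ψ
      rw [mul_iSup']
      refine iSup_le fun ψ => ?_
      refine le_trans ?_ (le_iSup _ ψ)
      rw [← mul_assoc]
      exact mul_mono_left' (ψ.2.1 x' x) _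
    have hin2 : ∀ Ψ : PhiCarrier Φ (phiCat Φ a),
        InPhi Φ a fun x => ⨆ ψ : PhiCarrier Φ a, ψ.1 x * Ψ.1 ψ := by
      intro Ψ
      have hΨd : IsDist (phiCat Φ a) (unitCat V) (fun ψ (_ : PUnit) => Ψ.1 ψ) :=
        ⟨fun ψ' ψ _ => Ψ.2.1 ψ' ψ, fun ψ _ _ => (mul_one _).le⟩
      have hc := hΦ.ax2_star a (phiCat Φ a) (unitCat V) (fun ψ _ => Ψ.1 ψ)
        (yPhi Φ hΦ a) hΨd (yPhi_isVFunctor Φ hΦ a) Ψ.2.2 (yPhi_star_in_Phi Φ hΦ a)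
      have he : dComp (fun ψ (_ : PUnit) => Ψ.1 ψ) (fStar (phiCat Φ a) (yPhi Φ hΦ a))
          = fun x (_ : PUnit) => ⨆ ψ : PhiCarrier Φ a, ψ.1 x * Ψ.1 ψ := by
        funext x u
        refine iSup_congr fun ψ => ?_
        show (⨅ x', qhom (a.hom x' x) (ψ.1 x')) * Ψ.1 ψ = ψ.1 x * Ψ.1 ψ
        rw [yoneda_eval a ψ.2.1 x]
      rw [he] at hc
      exact hc
    have hSid : ∀ ψ : PhiCarrier Φ a,
        (⟨fun x => ⨆ χ : PhiCarrier Φ a, χ.1 x * (yPhi Φ hΦ (phiCat Φ a) ψ).1 χ,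
          hpre2 _, hin2 _⟩ : PhiCarrier Φ a) = ψ := by
      intro ψ
      apply Subtype.ext
      funext x
      show (⨆ χ : PhiCarrier Φ a, χ.1 x * ⨅ x', qhom (χ.1 x') (ψ.1 x')) = ψ.1 x
      apply le_antisymm
      · refine iSup_le fun χ => ?_
        exact le_trans (mul_mono_right' _ (iInf_le _ x)) (qhom_counit' _ _)
      · refine le_trans ?_ (le_iSup _ ψ)
        calc ψ.1 x = ψ.1 x * 1 := (mul_one _).symm
          _ ≤ ψ.1 x * ⨅ x', qhom (ψ.1 x') (ψ.1 x') :=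
            mul_mono_right' _ (le_iInf fun x' => le_qhom_iff.mpr (mul_one _).le)
    refine ⟨fun Ψ => ⟨fun x => ⨆ ψ : PhiCarrier Φ a, ψ.1 x * Ψ.1 ψ, hpre2 Ψ, hin2 Ψ⟩,
      fun Ψ x => rfl, ?_, ?_, ?_, hSid⟩
    · intro Ψ Ψ'
      show (⨅ χ : PhiCarrier Φ a, qhom (Ψ.1 χ) (Ψ'.1 χ)) ≤
          ⨅ x, qhom (⨆ ψ : PhiCarrier Φ a, ψ.1 x * Ψ.1 ψ)
            (⨆ ψ : PhiCarrier Φ a, ψ.1 x * Ψ'.1 ψ)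
      refine le_iInf fun x => le_qhom_iff.mpr ?_
      rw [iSup_mul'']
      refine iSup_le fun ψ => ?_
      refine le_trans ?_ (le_iSup _ ψ)
      rw [mul_assoc]
      exact mul_mono_right' _
        (le_trans (mul_mono_right' _ (iInf_le _ ψ)) (qhom_counit' _ _))
    · intro Ψ
      show (1 : V) ≤ ⨅ ψ : PhiCarrier Φ a, qhom (Ψ.1 ψ)
          (⨅ x, qhom (ψ.1 x) (⨆ ψ' : PhiCarrier Φ a, ψ'.1 x * Ψ.1 ψ'))
      refine le_iInf fun ψ => le_qhom_iff.mpr (le_iInf fun x => le_qhom_iff.mpr ?_)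
      rw [mul_one]
      exact le_iSup (fun ψ' : PhiCarrier Φ a => ψ'.1 x * Ψ.1 ψ') ψ
    · intro ψ
      show (1 : V) ≤ ⨅ x, qhom
          (⨆ χ : PhiCarrier Φ a, χ.1 x * ⨅ x', qhom (χ.1 x') (ψ.1 x')) (ψ.1 x)
      refine le_iInf fun x => le_qhom_iff.mpr ?_
      rw [mul_one]
      refine iSup_le fun χ => ?_
      exact le_trans (mul_mono_right' _ (iInf_le _ x)) (qhom_counit' _ _)
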